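/- Assume the weight matrix ω is symmetric. For every x ∈ ℝ^N, the matrix with entries √(F'(x_i))·J(x)_{ij}/√(F'(x_j)) is a symmetric matrix; that is, the Jacobian J(x) is conjugate, via the positive diagonal matrix D^{1/2} with D = diag(F'(x_1),…,F'(x_N)), to the symmetric matrix −I + g·D^{1/2}·C·D^{1/2}, where C_ij = F(ω_ij). -/

import Mathlib

open Real

noncomputable def F (lam s : ℝ) : ℝ := (2 / Real.pi) * Real.arctan (lam * Real.pi * s / 2)

noncomputable def Fd (lam s : ℝ) : ℝ := lam / (1 + (lam * Real.pi * s / 2) ^ 2)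

noncomputable def J (N : ℕ) (lam g : ℝ) (ω : Fin N → Fin N → ℝ) (x : Fin N → ℝ) :
    Matrix (Fin N) (Fin N) ℝ :=
  Matrix.of fun i j => -(if i = j then (1 : ℝ) else 0) + g * F lam (ω i j) * Fd lam (x j)

lemma Fd_pos (lam s : ℝ) (hlam : 0 < lam) : 0 < Fd lam s := by
  unfold Fd
  positivity

/-- For symmetric ω, the matrix √(F'(x_i))·J(x)_{ij}/√(F'(x_j)) is symmetric,
and equals −I + g·D^{1/2}·C·D^{1/2} with C_{ij} = F(ω_{ij}), D = diag(F'(x_i)). -/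
theorem hopfield_jacobian_symmetrizable (N : ℕ) (hN : 1 ≤ N) (lam g : ℝ)
    (hlam : 0 < lam) (hg : 0 < g) (ω : Fin N → Fin N → ℝ)
    (hsym : ∀ i j, ω i j = ω j i) :
    ∀ x : Fin N → ℝ,
      (Matrix.of fun i j =>
          Real.sqrt (Fd lam (x i)) * J N lam g ω x i j / Real.sqrt (Fd lam (x j))).IsSymm ∧
      (Matrix.of fun i j =>
          Real.sqrt (Fd lam (x i)) * J N lam g ω x i j / Real.sqrt (Fd lam (x j))) =
        Matrix.of fun i j => -(if i = j then (1 : ℝ) else 0) +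
          g * (Real.sqrt (Fd lam (x i)) * F lam (ω i j) * Real.sqrt (Fd lam (x j))) := by
  intro x
  have hpos : ∀ j : Fin N, 0 < Real.sqrt (Fd lam (x j)) :=
    fun j => Real.sqrt_pos.mpr (Fd_pos lam (x j) hlam)
  have hsq : ∀ j : Fin N, Real.sqrt (Fd lam (x j)) * Real.sqrt (Fd lam (x j)) = Fd lam (x j) :=
    fun j => Real.mul_self_sqrt (Fd_pos lam (x j) hlam).le
  have key : (Matrix.of fun i j =>
      Real.sqrt (Fd lam (x i)) * J N lam g ω x i j / Real.sqrt (Fd lam (x j))) =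
      Matrix.of fun i j => -(if i = j then (1 : ℝ) else 0) +
        g * (Real.sqrt (Fd lam (x i)) * F lam (ω i j) * Real.sqrt (Fd lam (x j))) := by
    ext i j
    simp only [Matrix.of_apply, J]
    rcases eq_or_ne i j with rfl | hij
    · have hi := hsq i
      have hpi := hpos i
      simp only [if_pos rfl]
      generalize Real.sqrt (Fd lam (x i)) = a at hi hpi ⊢
      rw [← hi]
      field_simp
    · have hj := hsq j
      have hpi := hpos i
      have hpj := hpos j
      simp only [if_neg hij]
      generalize Real.sqrt (Fd lam (x i)) = a at hpi ⊢
      generalize Real.sqrt (Fd lam (x j)) = b at hj hpj ⊢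
      rw [← hj]
      field_simp
      ring
  refine ⟨?_, key⟩
  rw [key]
  ext i j
  simp only [Matrix.transpose_apply, Matrix.of_apply, hsym i j]
  rcases eq_or_ne i j with rfl | hij
  · ring
  · simp only [if_neg hij, if_neg (Ne.symm hij)]
    ring
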